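/- Under the hypotheses of the partial-measurement theorem (X_o observable w.r.t. S_o, C critical w.r.t. (S_o, X_o), removing C makes H rank deficient), every nonzero vector a_o in the one-dimensional space A_o is a scalar multiple of H_o y, where y is any nonzero vector in the null space of H̄ (H with rows in C deleted); and the full attack vector supported on C obtained by extending a_o by zeros equals a scalar multiple of Hy, hence is an unobservable attack. -/

import Mathlib

open Matrix

/-- The state variables in `X` are observable with respect to the sensor set `S`. -/
def ObsWrt {m n : ℕ} (H : Matrix (Fin m) (Fin n) ℝ) (S : Finset (Fin m))
    (X : Set (Fin n)) : Prop :=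
  ∀ y : Fin n → ℝ, (∀ i ∈ S, H.mulVec y i = 0) → ∀ j ∈ X, y j = 0

/-- `C` is a critical set with respect to `(S, X)`. -/
def CriticalWrt {m n : ℕ} (H : Matrix (Fin m) (Fin n) ℝ) (S C : Finset (Fin m))
    (X : Set (Fin n)) : Prop :=
  C ⊆ S ∧ ¬ ObsWrt H (S \ C) X ∧ ∀ C' ⊂ C, ObsWrt H (S \ C') X

/-- Under the partial-measurement hypotheses, every nonzero `b ∈ A_o` is a scalar
multiple of `H_o y` for any nonzero `y ∈ Null(H̄)`, and its extension by zeros equals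
the same scalar multiple of `H y`; hence it yields an unobservable attack supported on `C`. -/
theorem framing_partial_unobservable
    {m n : ℕ} (H : Matrix (Fin m) (Fin n) ℝ)
    (hH : ∀ y' : Fin n → ℝ, H.mulVec y' = 0 → y' = 0)  -- full column rank
    (So C : Finset (Fin m)) (Xo : Set (Fin n))
    (hXo : Xo = {j : Fin n | ∃ i ∈ So, H i j ≠ 0})
    (hobs : ObsWrt H So Xo)
    (hcrit : CriticalWrt H So C Xo)
    (y : Fin n → ℝ) (hy : y ≠ 0) (hyker : ∀ i ∉ C, H.mulVec y i = 0)
    (b : {i : Fin m // i ∈ So} → ℝ) (hb : b ≠ 0)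
    (hbrange : ∃ p : Fin n → ℝ,
      (Matrix.of fun (i : {i : Fin m // i ∈ So}) (j : Fin n) => H i.1 j).mulVec p = b)
    (hbsupp : ∀ i : {i : Fin m // i ∈ So}, i.1 ∉ C → b i = 0) :
    ∃ α : ℝ, α ≠ 0 ∧
      b = α • (Matrix.of fun (i : {i : Fin m // i ∈ So}) (j : Fin n) => H i.1 j).mulVec y ∧
      (fun i : Fin m => if h : i ∈ So then b ⟨i, h⟩ else 0) = α • H.mulVec y ∧
      (fun i : Fin m => if h : i ∈ So then b ⟨i, h⟩ else 0) ≠ 0 ∧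
      (∃ x : Fin n → ℝ,
        H.mulVec x = fun i : Fin m => if h : i ∈ So then b ⟨i, h⟩ else 0) ∧
      (∀ i ∉ C, (if h : i ∈ So then b ⟨i, h⟩ else 0) = 0) := by
  classical
  have hCS : C ⊆ So := hcrit.1
  -- find c ∈ C with (H y) c ≠ 0
  have hc : ∃ c ∈ C, H.mulVec y c ≠ 0 := by
    by_contra h
    push_neg at h
    apply hy
    apply hH
    funext i
    by_cases hi : i ∈ C
    · simpa using h i hi
    · simpa using hyker i hi
  obtain ⟨c, hcC, hcy⟩ := hc
  obtain ⟨p, hp⟩ := hbrange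
  have hpb : ∀ (i : Fin m) (h : i ∈ So), H.mulVec p i = b ⟨i, h⟩ := by
    intro i h
    have := congrFun hp ⟨i, h⟩
    simpa [Matrix.mulVec, Matrix.of_apply] using this
  set α := H.mulVec p c / H.mulVec y c with hα
  set z := p - α • y with hzdef
  have hzv : H.mulVec z = H.mulVec p - α • H.mulVec y := by
    simp [hzdef, Matrix.mulVec_sub, Matrix.mulVec_smul]
  have hzXo : ∀ j ∈ Xo, z j = 0 := by
    have hprop : C \ {c} ⊂ C :=
      Finset.sdiff_ssubset (Finset.singleton_subset_iff.mpr hcC) (Finset.singleton_nonempty c)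
    apply hcrit.2.2 (C \ {c}) hprop z
    intro i hi
    rw [Finset.mem_sdiff, Finset.mem_sdiff, Finset.mem_singleton] at hi
    obtain ⟨hiS, hiC⟩ := hi
    have hzi := congrFun hzv i
    by_cases hic : i = c
    · subst hic
      rw [hzi]
      simp only [Pi.sub_apply, Pi.smul_apply, smul_eq_mul, hα]
      field_simp
      simp
    · have hiC' : i ∉ C := fun h => hiC ⟨h, hic⟩
      rw [hzi]
      simp [hpb i hiS, hbsupp ⟨i, hiS⟩ hiC', hyker i hiC']
  have hHoz : ∀ i ∈ So, H.mulVec z i = 0 := by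
    intro i hi
    unfold Matrix.mulVec dotProduct
    apply Finset.sum_eq_zero
    intro j _
    by_cases hj : j ∈ Xo
    · rw [hzXo j hj, mul_zero]
    · have : H i j = 0 := by
        rw [hXo] at hj
        simp only [Set.mem_setOf_eq, not_exists, not_and, not_not] at hj
        exact hj i hi
      simp [this]
  have hkey : ∀ i ∈ So, H.mulVec p i = α * H.mulVec y i := by
    intro i hi
    have := hHoz i hi
    rw [hzv] at this
    have : H.mulVec p i - α * H.mulVec y i = 0 := by simpa using this
    linarith
  have hbeq : ∀ (i : {i : Fin m // i ∈ So}), b i = α * H.mulVec y i.1 := by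
    intro i
    rw [← hpb i.1 i.2, hkey i.1 i.2]
  have hαne : α ≠ 0 := by
    intro h0
    apply hb
    funext i
    simp [hbeq i, h0]
  refine ⟨α, hαne, ?_, ?_, ?_, ?_, ?_⟩
  · funext i
    rw [hbeq i]
    simp [Matrix.mulVec, Matrix.of_apply, dotProduct]
  · funext i
    by_cases h : i ∈ So
    · simp only [dif_pos h, Pi.smul_apply, smul_eq_mul]
      exact hbeq ⟨i, h⟩
    · have hiC : i ∉ C := fun hc' => h (hCS hc')
      simp [dif_neg h, hyker i hiC]
  · intro hcontra
    apply hb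
    funext i
    have := congrFun hcontra i.1
    simpa [i.2] using this
  · refine ⟨α • y, ?_⟩
    funext i
    by_cases h : i ∈ So
    · simp only [Matrix.mulVec_smul, Pi.smul_apply, smul_eq_mul, dif_pos h]
      exact (hbeq ⟨i, h⟩).symm
    · have hiC : i ∉ C := fun hc' => h (hCS hc')
      simp [Matrix.mulVec_smul, dif_neg h, hyker i hiC]
  · intro i hi
    by_cases h : i ∈ So
    · rw [dif_pos h]
      exact hbsupp ⟨i, h⟩ hi
    · rw [dif_neg h]
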